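/- Let r₀ > 0, δ ≥ 0, let h : [0,∞) → ℝ be a backward profile function with area radius r₀ and Hawking mass bound δ, and let 0 < x ≤ r₀. Then for every σ with 0 ≤ σ ≤ r₀ − x the following hold: (i) max(r₀ − σ, 0) ≤ h(σ) ≤ r₀; (ii) 0 ≤ 1 + h'(σ) ≤ √(2δ/x); (iii) 0 ≤ h(σ) − (r₀ − σ) ≤ σ·√(2δ/x). -/

import Mathlib

/-- A *backward profile function* with area radius `r₀` and Hawking mass
bound `δ`: a differentiable function `h : [0,∞) → ℝ` with `h(0) = r₀`,
`−1 ≤ h'(σ) ≤ 0` and `h(σ)·(1 − h'(σ)²) ≤ 2δ` for all `σ ≥ 0`. -/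
def IsBackwardProfile (r₀ δ : ℝ) (h : ℝ → ℝ) : Prop :=
  h 0 = r₀
  ∧ (∀ σ ≥ (0:ℝ), DifferentiableAt ℝ h σ)
  ∧ (∀ σ ≥ (0:ℝ), -1 ≤ deriv h σ ∧ deriv h σ ≤ 0)
  ∧ (∀ σ ≥ (0:ℝ), h σ * (1 - (deriv h σ) ^ 2) ≤ 2 * δ)

/-- **Pointwise bounds on a backward profile function.**
If `h` is a backward profile function with area radius `r₀ > 0` and Hawking
mass bound `δ ≥ 0`, and `0 < x ≤ r₀`, then for every `0 ≤ σ ≤ r₀ − x`: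
(i) `max(r₀ − σ, 0) ≤ h(σ) ≤ r₀`; (ii) `0 ≤ 1 + h'(σ) ≤ √(2δ/x)`;
(iii) `0 ≤ h(σ) − (r₀ − σ) ≤ σ·√(2δ/x)`. -/
theorem backward_profile_pointwise_bounds
    (r₀ δ : ℝ) (hr : 0 < r₀) (hδ : 0 ≤ δ)
    (h : ℝ → ℝ) (hprof : IsBackwardProfile r₀ δ h)
    (x : ℝ) (hx : 0 < x) (hxr : x ≤ r₀) :
    ∀ σ : ℝ, 0 ≤ σ → σ ≤ r₀ - x →
      (max (r₀ - σ) 0 ≤ h σ ∧ h σ ≤ r₀)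
      ∧ (0 ≤ 1 + deriv h σ ∧ 1 + deriv h σ ≤ Real.sqrt (2 * δ / x))
      ∧ (0 ≤ h σ - (r₀ - σ) ∧ h σ - (r₀ - σ) ≤ σ * Real.sqrt (2 * δ / x)) := by
  obtain ⟨h0, hdiff, hder, hhaw⟩ := hprof
  have hconv : Convex ℝ (Set.Ici (0:ℝ)) := convex_Ici 0
  have hcont : ContinuousOn h (Set.Ici 0) := fun t ht =>
    (hdiff t ht).continuousAt.continuousWithinAt
  have hdiffOn : DifferentiableOn ℝ h (interior (Set.Ici (0:ℝ))) := by
    rw [interior_Ici]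
    exact fun t ht => (hdiff t (le_of_lt ht)).differentiableWithinAt
  -- lower bound: r₀ - σ ≤ h σ for σ ≥ 0
  have hlb : ∀ σ : ℝ, 0 ≤ σ → r₀ - σ ≤ h σ := by
    intro σ hσ
    have := hconv.mul_sub_le_image_sub_of_le_deriv hcont hdiffOn
      (C := -1) (by rw [interior_Ici]; exact fun t ht => (hder t (le_of_lt ht)).1)
      0 (Set.mem_Ici.mpr le_rfl) σ (Set.mem_Ici.mpr hσ) hσ
    simp only [h0, sub_zero] at this
    linarith
  -- upper bound: h σ ≤ r₀
  have hub : ∀ σ : ℝ, 0 ≤ σ → h σ ≤ r₀ := by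
    intro σ hσ
    have := hconv.image_sub_le_mul_sub_of_deriv_le hcont hdiffOn
      (C := 0) (by rw [interior_Ici]; exact fun t ht => (hder t (le_of_lt ht)).2)
      0 (Set.mem_Ici.mpr le_rfl) σ (Set.mem_Ici.mpr hσ) hσ
    simp only [h0, sub_zero, zero_mul] at this
    linarith
  -- derivative bound on [0, r₀ - x]
  have hderbd : ∀ σ : ℝ, 0 ≤ σ → σ ≤ r₀ - x →
      0 ≤ 1 + deriv h σ ∧ 1 + deriv h σ ≤ Real.sqrt (2 * δ / x) := by
    intro σ hσ hσ'
    obtain ⟨hd1, hd2⟩ := hder σ hσ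
    have hnn : 0 ≤ 1 + deriv h σ := by linarith
    refine ⟨hnn, ?_⟩
    have hxh : x ≤ h σ := by have := hlb σ hσ; linarith
    have h1 : (1 + deriv h σ) ^ 2 ≤ 1 - (deriv h σ) ^ 2 := by nlinarith
    have h2 : x * (1 - (deriv h σ) ^ 2) ≤ 2 * δ := by
      have hfac : 0 ≤ 1 - (deriv h σ) ^ 2 := by nlinarith
      calc x * (1 - (deriv h σ) ^ 2) ≤ h σ * (1 - (deriv h σ) ^ 2) :=
            mul_le_mul_of_nonneg_right hxh hfac
        _ ≤ 2 * δ := hhaw σ hσ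
    have h3 : (1 + deriv h σ) ^ 2 ≤ 2 * δ / x := by
      rw [le_div_iff₀ hx]
      nlinarith
    calc 1 + deriv h σ = Real.sqrt ((1 + deriv h σ) ^ 2) := by
          rw [Real.sqrt_sq hnn]
      _ ≤ Real.sqrt (2 * δ / x) := Real.sqrt_le_sqrt h3
  intro σ hσ hσ'
  have hlbσ : r₀ - σ ≤ h σ := hlb σ hσ
  refine ⟨⟨?_, hub σ hσ⟩, hderbd σ hσ hσ', ⟨by linarith, ?_⟩⟩
  · have : (0:ℝ) ≤ h σ := le_trans (by linarith) hlbσ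
    exact max_le hlbσ this
  · -- integrate the derivative bound on [0, σ] ⊆ [0, r₀ - x]
    set C := Real.sqrt (2 * δ / x) with hC
    have hconv2 : Convex ℝ (Set.Icc (0:ℝ) (r₀ - x)) := convex_Icc _ _
    have hgc : ContinuousOn (fun t => h t + t) (Set.Icc 0 (r₀ - x)) := by
      exact fun t ht => ((hdiff t ht.1).continuousAt.continuousWithinAt).add
        continuousWithinAt_id
    have hgd : DifferentiableOn ℝ (fun t => h t + t) (interior (Set.Icc (0:ℝ) (r₀ - x))) := by
      rw [interior_Icc]
      exact fun t ht => ((hdiff t (le_of_lt ht.1)).add (differentiableAt_fun_id)).differentiableWithinAt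
    have hgd' : ∀ t ∈ interior (Set.Icc (0:ℝ) (r₀ - x)),
        deriv (fun t => h t + t) t ≤ C := by
      rw [interior_Icc]
      intro t ht
      have hdt : deriv (fun s => h s + s) t = deriv h t + 1 := by
        rw [deriv_fun_add (hdiff t (le_of_lt ht.1)) differentiableAt_fun_id]
        simp
      rw [hdt]
      have := (hderbd t (le_of_lt ht.1) (le_of_lt ht.2)).2
      linarith
    have := hconv2.image_sub_le_mul_sub_of_deriv_le hgc hgd hgd'
      0 ⟨le_rfl, by linarith⟩ σ ⟨hσ, hσ'⟩ hσ
    simp only [h0, add_zero, sub_zero] at this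
    have hCσ : C * (σ - 0) = σ * C := by ring
    nlinarith [this]
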